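/- Let G be a group and let {A_i}_{i ∈ I} be a family of abstract normal subgroups of G, each torsion-free abelian and contained in the FC-center of G. Then the product of all the A_i is an abelian normal subgroup of G. -/

import Mathlib

/-- The definition of `Monoid.IsTorsionFree` from the older Mathlib (since removed). -/
def Monoid.IsTorsionFree (G : Type*) [Monoid G] : Prop :=
  ∀ g : G, g ≠ 1 → ¬IsOfFinOrder g

lemma key_comm {G : Type*} [Group G] {I : Type*} (A : I → Subgroup G)
    (hnorm : ∀ i, (A i).Normal)
    (htf : ∀ i, Monoid.IsTorsionFree ↥(A i))
    (hab : ∀ i, ∀ a ∈ A i, ∀ b ∈ A i, Commute a b)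
    (hFC : ∀ i, ∀ a ∈ A i, (Subgroup.centralizer {a}).FiniteIndex)
    {i j : I} {a b : G} (ha : a ∈ A i) (hb : b ∈ A j) : Commute a b := by
  set c : G := a⁻¹ * b⁻¹ * a * b with hc
  have hci : c ∈ A i := by
    have h1 : b⁻¹ * a * b ∈ A i := (hnorm i).conj_mem' a ha b
    have := (A i).mul_mem ((A i).inv_mem ha) h1
    simpa [hc, mul_assoc] using this
  have hcj : c ∈ A j := by
    have h1 : a⁻¹ * b⁻¹ * a ∈ A j := by
      have := (hnorm j).conj_mem b⁻¹ ((A j).inv_mem hb) a⁻¹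
      simpa [mul_assoc] using this
    have := (A j).mul_mem h1 hb
    simpa [hc, mul_assoc] using this
  have hca : Commute c a := hab i c hci a ha
  have hcb : Commute c b := hab j c hcj b hb
  have hab1 : a * b = b * a * c := by rw [hc]; group
  have hpow : ∀ n : ℕ, a * b ^ n = b ^ n * a * c ^ n := by
    intro n
    induction n with
    | zero => simp
    | succ n ih =>
      calc a * b ^ (n+1) = (a * b ^ n) * b := by rw [pow_succ, mul_assoc]
        _ = b ^ n * a * c ^ n * b := by rw [ih]
        _ = b ^ n * a * b * c ^ n := by
            rw [mul_assoc, mul_assoc, (hcb.pow_left n).eq]; simp [mul_assoc]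
        _ = b ^ n * (b * a * c) * c ^ n := by rw [mul_assoc (b^n), ← hab1, mul_assoc]
        _ = b ^ (n+1) * a * c ^ (n+1) := by
            rw [pow_succ, pow_succ']; group
  haveI := (hFC i a ha)
  haveI : Finite (G ⧸ Subgroup.centralizer {a}) :=
    Subgroup.finite_quotient_of_finiteIndex
  obtain ⟨m, n, hmn, heq⟩ := Finite.exists_ne_map_eq_of_infinite
    (fun k : ℕ => (QuotientGroup.mk (b ^ k) : G ⧸ Subgroup.centralizer {a}))
  wlog hlt : m < n generalizing m n
  · exact this n m hmn.symm heq.symm (by omega)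
  have hk : b ^ (n - m) ∈ Subgroup.centralizer {a} := by
    have h2 : (b ^ n)⁻¹ * b ^ m ∈ Subgroup.centralizer {a} := by
      simpa using (QuotientGroup.eq).mp heq.symm
    have h3 : b ^ (n - m) = ((b ^ n)⁻¹ * b ^ m)⁻¹ := by
      rw [mul_inv_rev, inv_inv, ← pow_sub_mul_pow b hlt.le]; group
    rw [h3]; exact (Subgroup.centralizer _).inv_mem h2
  have hcomm : a * b ^ (n - m) = b ^ (n - m) * a := by
    rw [Subgroup.mem_centralizer_iff] at hk
    exact hk a (by simp)
  have hcn : c ^ (n - m) = 1 := by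
    have h := hpow (n - m)
    rw [hcomm] at h
    exact (mul_eq_left).mp h.symm
  have hc1 : c = 1 := by
    by_contra hne
    have hne' : (⟨c, hci⟩ : ↥(A i)) ≠ 1 := by
      simpa [Subtype.ext_iff] using hne
    apply htf i _ hne'
    refine isOfFinOrder_iff_pow_eq_one.mpr ⟨n - m, by omega, ?_⟩
    ext; simpa using hcn
  have : a⁻¹ * b⁻¹ * a * b = 1 := by rw [← hc, hc1]
  have := congrArg (fun x => b * a * x) this
  simp only [mul_one] at this
  calc a * b = b * a * (a⁻¹ * b⁻¹ * a * b) := by group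
    _ = b * a := this

/-- If `A i` is a family of torsion-free abelian normal subgroups of `G`, each contained
in the FC-center of `G`, then their product (join) is an abelian normal subgroup of `G`. -/
theorem stmt4 {G : Type*} [Group G] {I : Type*} (A : I → Subgroup G)
    (hnorm : ∀ i, (A i).Normal)
    (htf : ∀ i, Monoid.IsTorsionFree ↥(A i))
    (hab : ∀ i, ∀ a ∈ A i, ∀ b ∈ A i, Commute a b)
    (hFC : ∀ i, ∀ a ∈ A i, (Subgroup.centralizer {a}).FiniteIndex) :
    (⨆ i, A i).Normal ∧ ∀ a ∈ ⨆ i, A i, ∀ b ∈ ⨆ i, A i, Commute a b := by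
  constructor
  · constructor
    intro x hx g
    revert hx
    have : (⨆ i, A i) ≤ Subgroup.comap ((MulAut.conj g).toMonoidHom) (⨆ i, A i) := by
      refine iSup_le fun i => ?_
      intro y hy
      simp only [Subgroup.mem_comap, MulEquiv.coe_toMonoidHom, MulAut.conj_apply]
      exact le_iSup A i ((hnorm i).conj_mem y hy g)
    intro hx
    simpa using this hx
  · intro a ha b hb
    have hsup : ∀ x ∈ (⨆ i, A i), ∀ j, ∀ y ∈ A j, Commute x y := by
      intro x hx
      have : (⨆ i, A i) ≤ Subgroup.centralizer (⋃ j, (A j : Set G)) := by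
        refine iSup_le fun i y hy => ?_
        rw [Subgroup.mem_centralizer_iff]
        intro h hh
        obtain ⟨_, ⟨j, rfl⟩, hj⟩ := hh
        exact (key_comm A hnorm htf hab hFC hy hj).symm.eq
      intro j y hy
      have := this hx
      rw [Subgroup.mem_centralizer_iff] at this
      exact (this y (Set.mem_iUnion.mpr ⟨j, hy⟩)).symm
    -- now b ∈ ⨆, show commute with a via same centralizer trick
    have hble : (⨆ i, A i) ≤ Subgroup.centralizer {a} := by
      refine iSup_le fun j y hy => ?_
      rw [Subgroup.mem_centralizer_iff]
      intro h hh
      rw [Set.mem_singleton_iff] at hh; rw [hh]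
      exact (hsup a ha j y hy).eq
    have := hble hb
    rw [Subgroup.mem_centralizer_iff] at this
    exact this a rfl
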